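/- Let D ⊆ ℝ^d be a measurable set, let 0 < α < 2, and let q: (0,∞) × D × D → [0,∞) be a measurable kernel satisfying: q_t(x,y) = q_t(y,x) for all t > 0 and x, y ∈ D; the Chapman–Kolmogorov equation q_{s+t}(x,y) = ∫_D q_s(x,z) q_t(z,y) dz for all s, t > 0; the sub-Markov property ∫_D q_t(x,z) dz ≤ 1 for all t > 0 and x ∈ D; and sup_{x,y ∈ D} q_t(x,y) ≤ c₁ t^{−d/α} for every t > 0. Set E(x) = ∫_0^∞ ∫_D q_t(x,z) dz dt. Then there exists a constant C = C(c₁, d, α) such that q_t(x,y) ≤ C E(x) E(y) / t^{2 + d/α} for all t > 0 and all x, y ∈ D. -/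

import Mathlib

open MeasureTheory

/-- Upper bound for a symmetric sub-Markov kernel with a stable on-diagonal bound: if
`q` is symmetric on `D`, satisfies the Chapman–Kolmogorov equation and the sub-Markov
property on `D`, and `q_t(x,y) ≤ c₁ t^{-d/α}` for all `t > 0`, then with
`E(x) = ∫_0^∞ ∫_D q_t(x,z) dz dt` there is a constant `C = C(c₁,d,α)` such that
`q_t(x,y) ≤ C E(x) E(y) / t^{2+d/α}` for all `t > 0` and `x, y ∈ D`. -/
theorem killed_stable_density_bound (d : ℕ) (α : ℝ) (hα1 : 0 < α) (hα2 : α < 2)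
    (c₁ : ℝ) (hc₁ : 0 < c₁) :
    ∃ C : ℝ, 0 < C ∧
      ∀ (D : Set (EuclideanSpace ℝ (Fin d))), MeasurableSet D →
      ∀ q : ℝ → EuclideanSpace ℝ (Fin d) → EuclideanSpace ℝ (Fin d) → ENNReal,
        Measurable (fun tp : ℝ × EuclideanSpace ℝ (Fin d) × EuclideanSpace ℝ (Fin d) =>
          q tp.1 tp.2.1 tp.2.2) →
        (∀ t > (0 : ℝ), ∀ x ∈ D, ∀ y ∈ D, q t x y = q t y x) →
        (∀ s > (0 : ℝ), ∀ t > (0 : ℝ), ∀ x ∈ D, ∀ y ∈ D,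
          q (s + t) x y = ∫⁻ z in D, q s x z * q t z y) →
        (∀ t > (0 : ℝ), ∀ x ∈ D, (∫⁻ z in D, q t x z) ≤ 1) →
        (∀ t > (0 : ℝ), ∀ x ∈ D, ∀ y ∈ D,
          q t x y ≤ ENNReal.ofReal (c₁ * t ^ (-(d : ℝ) / α))) →
        ∀ t > (0 : ℝ), ∀ x ∈ D, ∀ y ∈ D,
          q t x y ≤ ENNReal.ofReal C *
            ((∫⁻ s in Set.Ioi (0 : ℝ), ∫⁻ z in D, q s x z) *
              (∫⁻ s in Set.Ioi (0 : ℝ), ∫⁻ z in D, q s y z)) /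
            ENNReal.ofReal (t ^ (2 + (d : ℝ) / α)) := by
  refine ⟨16 * c₁ * 2 ^ ((d : ℝ) / α), by positivity, ?_⟩
  intro D hD q hq hsym hCK hsub hbd t ht x hx y hy
  -- measurability helpers
  have hq2 : ∀ s : ℝ, Measurable (fun p : EuclideanSpace ℝ (Fin d) × EuclideanSpace ℝ (Fin d) => q s p.1 p.2) := by
    intro s
    exact hq.comp (measurable_const.prodMk measurable_id)
  have hq1 : ∀ (s : ℝ) (x : EuclideanSpace ℝ (Fin d)), Measurable (fun z => q s x z) := by
    intro s x
    exact (hq2 s).comp (measurable_const.prodMk measurable_id)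
  have ht4 : (0 : ℝ) < t / 4 := by linarith
  have ht2 : (0 : ℝ) < t / 2 := by linarith
  -- monotonicity of total mass
  have mono : ∀ x ∈ D, ∀ s > (0 : ℝ), ∀ r > (0 : ℝ),
      (∫⁻ z in D, q (s + r) x z) ≤ ∫⁻ z in D, q s x z := by
    intro x hx s hs r hr
    have hmeas : Measurable (fun p : EuclideanSpace ℝ (Fin d) × EuclideanSpace ℝ (Fin d) =>
        q s x p.2 * q r p.2 p.1) :=
      ((hq2 s).comp (measurable_const.prodMk measurable_snd)).mul
        ((hq2 r).comp (measurable_snd.prodMk measurable_fst))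
    calc (∫⁻ z in D, q (s + r) x z)
        = ∫⁻ z in D, ∫⁻ w in D, q s x w * q r w z :=
          setLIntegral_congr_fun hD (fun z hz => hCK s hs r hr x hx z hz)
      _ = ∫⁻ w in D, ∫⁻ z in D, q s x w * q r w z :=
          lintegral_lintegral_swap hmeas.aemeasurable
      _ = ∫⁻ w in D, q s x w * ∫⁻ z in D, q r w z :=
          lintegral_congr fun w => lintegral_const_mul (q s x w) (hq1 r w)
      _ ≤ ∫⁻ w in D, q s x w * 1 :=
          setLIntegral_mono' hD fun w hw => mul_le_mul_right (hsub r hr w hw) _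
      _ = ∫⁻ w in D, q s x w := by simp
  -- mass at time t/4 bounded via expected exit time
  have key : ∀ x ∈ D, (∫⁻ z in D, q (t/4) x z) * ENNReal.ofReal (t/4) ≤
      ∫⁻ s in Set.Ioi (0 : ℝ), ∫⁻ z in D, q s x z := by
    intro x hx
    have h0 : (∫⁻ z in D, q (t/4) x z) * ENNReal.ofReal (t/4)
        = ∫⁻ _ in Set.Ioo (0 : ℝ) (t/4), (∫⁻ z in D, q (t/4) x z) := by
      rw [setLIntegral_const, Real.volume_Ioo]
      norm_num
    rw [h0]
    calc (∫⁻ _ in Set.Ioo (0 : ℝ) (t/4), (∫⁻ z in D, q (t/4) x z))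
        ≤ ∫⁻ s in Set.Ioo (0 : ℝ) (t/4), ∫⁻ z in D, q s x z := by
          refine setLIntegral_mono' measurableSet_Ioo fun s hs => ?_
          have h := mono x hx s hs.1 ((t/4) - s) (by linarith [hs.2])
          rwa [add_sub_cancel] at h
      _ ≤ ∫⁻ s in Set.Ioi (0 : ℝ), ∫⁻ z in D, q s x z :=
          lintegral_mono_set (fun s hs => hs.1)
  set K : ENNReal := ENNReal.ofReal (c₁ * (t/2) ^ (-(d : ℝ) / α)) with hK
  set Fx := ∫⁻ z in D, q (t/4) x z with hFx
  set Fy := ∫⁻ z in D, q (t/4) y z with hFy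
  set Ex := ∫⁻ s in Set.Ioi (0 : ℝ), ∫⁻ z in D, q s x z with hEx
  set Ey := ∫⁻ s in Set.Ioi (0 : ℝ), ∫⁻ z in D, q s y z with hEy
  -- main chain
  have main : q t x y ≤ Fx * (K * Fy) := by
    have h1 : q t x y = ∫⁻ z in D, q (t/4) x z * q (t/2 + t/4) z y := by
      have h := hCK (t/4) ht4 (t/2 + t/4) (by linarith) x hx y hy
      rwa [show t/4 + (t/2 + t/4) = t by ring] at h
    rw [h1]
    have h2 : ∀ z ∈ D, q (t/2 + t/4) z y ≤ K * Fy := by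
      intro z hz
      rw [hCK (t/2) ht2 (t/4) ht4 z hz y hy]
      calc (∫⁻ w in D, q (t/2) z w * q (t/4) w y)
          ≤ ∫⁻ w in D, K * q (t/4) w y :=
            setLIntegral_mono' hD fun w hw =>
              mul_le_mul' (hbd (t/2) ht2 z hz w hw) le_rfl
        _ = K * ∫⁻ w in D, q (t/4) w y := lintegral_const_mul K ((hq2 (t/4)).comp (measurable_id.prodMk measurable_const))
        _ = K * Fy := by
            rw [hFy, setLIntegral_congr_fun hD
              (fun w hw => hsym (t/4) ht4 w hw y hy)]
    calc (∫⁻ z in D, q (t/4) x z * q (t/2 + t/4) z y)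
        ≤ ∫⁻ z in D, q (t/4) x z * (K * Fy) :=
          setLIntegral_mono' hD fun z hz => mul_le_mul' le_rfl (h2 z hz)
      _ = Fx * (K * Fy) := lintegral_mul_const (K * Fy) (hq1 (t/4) x)
  -- bound Fx and Fy
  have hb0 : ENNReal.ofReal (t/4) ≠ 0 := by
    simp [ENNReal.ofReal_eq_zero]; linarith
  have hbt : ENNReal.ofReal (t/4) ≠ ⊤ := ENNReal.ofReal_ne_top
  have hFxE : Fx ≤ Ex * (ENNReal.ofReal (t/4))⁻¹ := by
    rw [← div_eq_mul_inv]
    exact (ENNReal.le_div_iff_mul_le (Or.inl hb0) (Or.inl hbt)).2 (key x hx)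
  have hFyE : Fy ≤ Ey * (ENNReal.ofReal (t/4))⁻¹ := by
    rw [← div_eq_mul_inv]
    exact (ENNReal.le_div_iff_mul_le (Or.inl hb0) (Or.inl hbt)).2 (key y hy)
  have step : q t x y ≤ (Ex * (ENNReal.ofReal (t/4))⁻¹) *
      (K * (Ey * (ENNReal.ofReal (t/4))⁻¹)) :=
    main.trans (mul_le_mul' hFxE (mul_le_mul' le_rfl hFyE))
  refine step.trans (le_of_eq ?_)
  -- final arithmetic
  have hinv : (ENNReal.ofReal (t/4))⁻¹ = ENNReal.ofReal ((t/4)⁻¹) :=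
    (ENNReal.ofReal_inv_of_pos ht4).symm
  have htr : (0 : ℝ) < t ^ ((d : ℝ) / α) := Real.rpow_pos_of_pos ht 0 |>.trans_le le_rfl |> fun _ => Real.rpow_pos_of_pos ht _
  have h2r : (0 : ℝ) < 2 ^ ((d : ℝ) / α) := Real.rpow_pos_of_pos two_pos _
  have hreal : c₁ * (t/2) ^ (-(d : ℝ) / α) * ((t/4)⁻¹ * (t/4)⁻¹)
      = (16 * c₁ * 2 ^ ((d : ℝ) / α)) * (t ^ (2 + (d : ℝ) / α))⁻¹ := by
    have e1 : (t/2 : ℝ) ^ (-(d : ℝ) / α) = (t ^ ((d : ℝ) / α) / 2 ^ ((d : ℝ) / α))⁻¹ := by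
      rw [neg_div, Real.rpow_neg (by linarith), Real.div_rpow (by linarith) (by norm_num)]
    have e2 : (t : ℝ) ^ (2 + (d : ℝ) / α) = t ^ (2 : ℝ) * t ^ ((d : ℝ) / α) :=
      Real.rpow_add ht 2 _
    have e3 : (t : ℝ) ^ (2 : ℝ) = t * t := by
      rw [show (2 : ℝ) = ((2 : ℕ) : ℝ) by norm_num, Real.rpow_natCast]; ring
    rw [e1, e2, e3]
    field_simp
    ring
  have combine : (ENNReal.ofReal (t/4))⁻¹ * (K * (ENNReal.ofReal (t/4))⁻¹)
      = ENNReal.ofReal (16 * c₁ * 2 ^ ((d : ℝ) / α)) * (ENNReal.ofReal (t ^ (2 + (d : ℝ) / α)))⁻¹ := by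
    rw [hinv, hK, ← ENNReal.ofReal_mul (by positivity), ← ENNReal.ofReal_mul (by positivity),
      ← ENNReal.ofReal_inv_of_pos (Real.rpow_pos_of_pos ht _),
      ← ENNReal.ofReal_mul (by positivity)]
    congr 1
    calc (t/4)⁻¹ * (c₁ * (t/2) ^ (-(d : ℝ) / α) * (t/4)⁻¹)
        = c₁ * (t/2) ^ (-(d : ℝ) / α) * ((t/4)⁻¹ * (t/4)⁻¹) := by ring
      _ = _ := hreal
  calc (Ex * (ENNReal.ofReal (t/4))⁻¹) * (K * (Ey * (ENNReal.ofReal (t/4))⁻¹))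
      = (Ex * Ey) * ((ENNReal.ofReal (t/4))⁻¹ * (K * (ENNReal.ofReal (t/4))⁻¹)) := by ring
    _ = (Ex * Ey) * (ENNReal.ofReal (16 * c₁ * 2 ^ ((d : ℝ) / α)) * (ENNReal.ofReal (t ^ (2 + (d : ℝ) / α)))⁻¹) := by rw [combine]
    _ = ENNReal.ofReal (16 * c₁ * 2 ^ ((d : ℝ) / α)) * (Ex * Ey) / ENNReal.ofReal (t ^ (2 + (d : ℝ) / α)) := by
        simp only [div_eq_mul_inv]; ring
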